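/- arXiv:2205.13262 — 4 statements merged into one kernel-verified Lean document; each statement's English description precedes it below -/
import Mathlib

section
/- Let n ≥ 1, k ≥ 1 be integers and let f be a real-analytic vector field on a neighborhood U of 0 in ℝⁿ with Taylor expansion f(x) = Σ_{j ≥ k} f_j(x) at 0, where each component of f_j is a homogeneous polynomial of degree j and f_k ≠ 0. Let F be a real-analytic function on U with F(0) = 0, not identically zero near 0, that is a first integral of ẋ = f(x), i.e., DF(x)ᵀ f(x) = 0 on U. Let ℓ be the smallest integer such that the degree-ℓ homogeneous Taylor part F_ℓ of F at 0 is nonzero. Then F_ℓ is a first integral of the truncated system ẏ = f_k(y), i.e., DF_ℓ(y)ᵀ f_k(y) = 0 for all y ∈ ℝⁿ. -/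
open Filter Asymptotics Topology FormalMultilinearSeries

section Aux

variable {E G : Type*} [NormedAddCommGroup E] [NormedSpace ℝ E]
  [NormedAddCommGroup G] [NormedSpace ℝ G]

lemma aux_derivSeries_zero (p : FormalMultilinearSeries ℝ E G) (m : ℕ)
    (h : p (1 + m) = 0) : p.derivSeries m = 0 := by
  have h1 : p.changeOriginSeries 1 m = 0 := by
    rw [FormalMultilinearSeries.changeOriginSeries]
    refine Finset.sum_eq_zero fun s _ => ?_
    rw [FormalMultilinearSeries.changeOriginSeriesTerm]
    refine ContinuousMultilinearMap.ext fun v => ?_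
    refine ContinuousMultilinearMap.ext fun x => ?_
    simp [h]
  simp only [FormalMultilinearSeries.derivSeries,
    ContinuousLinearMap.compFormalMultilinearSeries_apply, h1]
  ext v x
  simp

lemma aux_trunc (Gf : E → G) (q : FormalMultilinearSeries ℝ E G) {r : ENNReal} (m : ℕ)
    (h : HasFPowerSeriesOnBall Gf q 0 r) :
    HasFPowerSeriesOnBall (fun z => Gf z - q.partialSum m z)
      (fun j => if j < m then 0 else q j) 0 r := by
  refine ⟨h.r_le.trans (FormalMultilinearSeries.radius_le_of_le fun n => ?_), h.r_pos, ?_⟩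
  · by_cases hn : n < m <;> simp [hn]
  · intro z hz
    have h1 := h.hasSum hz
    have h2 : HasSum (fun j => if j < m then (q j fun _ => z) else 0) (q.partialSum m z) := by
      have h3 : ∀ j ∉ Finset.range m, (if j < m then (q j fun _ => z) else 0) = 0 := by
        intro j hj; rw [Finset.mem_range] at hj; simp [hj]
      have h4 : HasSum (fun j => if j < m then (q j fun _ => z) else 0)
          (∑ j ∈ Finset.range m, if j < m then (q j fun _ => z) else 0) :=
        hasSum_sum_of_ne_finset_zero h3
      have h5 : (∑ j ∈ Finset.range m, if j < m then (q j fun _ => z) else 0)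
          = q.partialSum m z := by
        rw [FormalMultilinearSeries.partialSum]
        exact Finset.sum_congr rfl fun j hj => by
          rw [Finset.mem_range] at hj; simp [hj]
      rwa [h5] at h4
    have hfg : (fun j => ((if j < m then 0 else q j) :
          ContinuousMultilinearMap ℝ (fun _ : Fin j => E) G) fun _ => z)
        = fun j => (q j fun _ => z) - (if j < m then (q j fun _ => z) else 0) := by
      funext j; by_cases hj : j < m <;> simp [hj]
    simp only [zero_add] at h1 ⊢
    rw [hfg]
    exact h1.sub h2

lemma aux_fderiv_homog (Q : E → ℝ) (ℓ : ℕ) (hℓ : 1 ≤ ℓ)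
    (hd : Differentiable ℝ Q) (hh : ∀ (c : ℝ) (z : E), Q (c • z) = c ^ ℓ • Q z)
    {c : ℝ} (hc : c ≠ 0) (y : E) :
    fderiv ℝ Q (c • y) = c ^ (ℓ - 1) • fderiv ℝ Q y := by
  have hmap : HasFDerivAt (fun z : E => c • z) (c • ContinuousLinearMap.id ℝ E) y :=
    (hasFDerivAt_id y).const_smul c
  have h2 : HasFDerivAt (fun z => Q (c • z))
      ((fderiv ℝ Q (c • y)).comp (c • ContinuousLinearMap.id ℝ E)) y :=
    ((hd (c • y)).hasFDerivAt).comp y hmap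
  have h1 : (fun z => Q (c • z)) = fun z => c ^ ℓ • Q z := funext fun z => hh c z
  rw [h1] at h2
  have h3 : HasFDerivAt (fun z => c ^ ℓ • Q z) (c ^ ℓ • fderiv ℝ Q y) y :=
    ((hd y).hasFDerivAt).const_smul (c ^ ℓ)
  have h4 := h2.unique h3
  ext w
  have h5 : c * (fderiv ℝ Q (c • y)) w = c ^ ℓ * (fderiv ℝ Q y) w := by
    have := congrArg (fun L : E →L[ℝ] ℝ => L w) h4
    simpa using this
  have hpow : c ^ ℓ = c * c ^ (ℓ - 1) := by
    conv_lhs => rw [show ℓ = (ℓ - 1) + 1 by omega]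
    rw [pow_succ]; ring
  rw [hpow, mul_assoc] at h5
  have h6 := mul_left_cancel₀ hc h5
  rw [ContinuousLinearMap.smul_apply, smul_eq_mul]
  exact h6

end Aux

set_option maxHeartbeats 1000000 in
/-- If `F` is an analytic first integral (vanishing at `0`, not identically zero) of the
real-analytic system `ẋ = f(x)`, where the Taylor expansion of `f` at `0` starts with the
nonzero homogeneous part `f_k` of degree `k`, then the leading homogeneous Taylor part
`F_ℓ` of `F` at `0` is a first integral of the truncated system `ẏ = f_k(y)`.
The degree-`j` homogeneous Taylor parts are `y ↦ p j (y, …, y)` and `y ↦ q j (y, …, y)`,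
where `p, q` are the power series of `f, F` at `0`. -/
theorem leading_part_first_integral (n k ℓ : ℕ) (hn : 1 ≤ n) (hk : 1 ≤ k)
    (U : Set (Fin n → ℝ)) (hU : IsOpen U) (h0U : (0 : Fin n → ℝ) ∈ U)
    (f : (Fin n → ℝ) → (Fin n → ℝ)) (hfa : AnalyticOnNhd ℝ f U)
    (p : FormalMultilinearSeries ℝ (Fin n → ℝ) (Fin n → ℝ))
    (hf : HasFPowerSeriesAt f p 0)
    (hplow : ∀ j < k, ∀ x, (p j fun _ => x) = 0)
    (hfk : ∃ x, (p k fun _ => x) ≠ 0)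
    (F : (Fin n → ℝ) → ℝ) (hFa : AnalyticOnNhd ℝ F U) (hF0 : F 0 = 0)
    (q : FormalMultilinearSeries ℝ (Fin n → ℝ) ℝ)
    (hF : HasFPowerSeriesAt F q 0)
    (hfirst : ∀ x ∈ U, fderiv ℝ F x (f x) = 0)
    -- `ℓ` is the smallest degree with nonvanishing homogeneous Taylor part of `F`
    (hqlow : ∀ j < ℓ, ∀ x, (q j fun _ => x) = 0)
    (hqℓ : ∃ x, (q ℓ fun _ => x) ≠ 0) :
    ∀ y, fderiv ℝ (fun z => q ℓ fun _ => z) y (p k fun _ => y) = 0 := by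
  classical
  -- ℓ ≥ 1
  have hl1 : 1 ≤ ℓ := by
    by_contra h
    have hℓ0 : ℓ = 0 := by omega
    obtain ⟨x, hx⟩ := hqℓ
    apply hx
    subst hℓ0
    obtain ⟨r, hr⟩ := hF
    have h0 := hr.coeff_zero (fun _ => x)
    rw [hF0] at h0
    exact h0
  intro y
  set Qℓ : (Fin n → ℝ) → ℝ := fun z => q ℓ fun _ => z with hQdef
  set w : Fin n → ℝ := p k fun _ => y with hwdef
  -- differentiability of Qℓ
  have hQdiff : Differentiable ℝ Qℓ := by
    intro z
    have h1 := (q ℓ).hasFDerivAt (fun _ : Fin ℓ => z)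
    have h2 := (ContinuousLinearMap.pi fun _ : Fin ℓ =>
      ContinuousLinearMap.id ℝ (Fin n → ℝ)).hasFDerivAt (x := z)
    exact (h1.comp z h2).differentiableAt
  -- homogeneity of Qℓ
  have hhom : ∀ (c : ℝ) (z : Fin n → ℝ), Qℓ (c • z) = c ^ ℓ • Qℓ z := by
    intro c z
    have := (q ℓ).map_smul_univ (fun _ => c) (fun _ => z)
    simpa [Finset.prod_const] using this
  -- power series decomposition of F
  obtain ⟨r, hrF⟩ := hF
  have hPS : ∀ z : Fin n → ℝ, q.partialSum (ℓ + 1) z = Qℓ z := by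
    intro z
    rw [FormalMultilinearSeries.partialSum, Finset.sum_range_succ]
    rw [Finset.sum_eq_zero fun j hj => hqlow j (Finset.mem_range.1 hj) z, zero_add]
  have hS0 := aux_trunc F q (ℓ + 1) hrF
  have hSfun : (fun z => F z - q.partialSum (ℓ + 1) z) = fun z => F z - Qℓ z :=
    funext fun z => by rw [hPS z]
  rw [hSfun] at hS0
  -- derivative power series of S and big-O bound
  have hbig := hS0.fderiv.hasFPowerSeriesAt.isBigO_sub_partialSum_pow ℓ
  have hps0 : ∀ x : Fin n → ℝ,
      (FormalMultilinearSeries.partialSum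
        (FormalMultilinearSeries.derivSeries fun j => if j < ℓ + 1 then 0 else q j) ℓ x) = 0 := by
    intro x
    rw [FormalMultilinearSeries.partialSum]
    refine Finset.sum_eq_zero fun j hj => ?_
    rw [Finset.mem_range] at hj
    rw [aux_derivSeries_zero (fun j => if j < ℓ + 1 then 0 else q j : FormalMultilinearSeries ℝ (Fin n → ℝ) ℝ) j
      (by show (if 1 + j < ℓ + 1 then 0 else q (1 + j)) = 0; rw [if_pos (by omega)])]
    simp
  have hbig' : (fun x => fderiv ℝ (fun z => F z - Qℓ z) x) =O[𝓝 0] fun x : Fin n → ℝ => ‖x‖ ^ ℓ := by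
    simp only [hps0, zero_add, sub_zero] at hbig
    exact hbig
  obtain ⟨C1, hC1⟩ := hbig'.bound
  -- big-O bound for f
  have hbigf := hf.isBigO_sub_partialSum_pow (k + 1)
  have hPSf : ∀ z : Fin n → ℝ, p.partialSum (k + 1) z = p k fun _ => z := by
    intro z
    rw [FormalMultilinearSeries.partialSum, Finset.sum_range_succ]
    rw [Finset.sum_eq_zero fun j hj => hplow j (Finset.mem_range.1 hj) z, zero_add]
  have hbigf' : (fun x => f x - (p k fun _ => x)) =O[𝓝 0] fun x : Fin n → ℝ => ‖x‖ ^ (k + 1) := by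
    have : (fun x : Fin n → ℝ => f (0 + x) - p.partialSum (k + 1) x)
        = fun x => f x - (p k fun _ => x) := funext fun x => by rw [zero_add, hPSf x]
    rwa [this] at hbigf
  obtain ⟨C2, hC2⟩ := hbigf'.bound
  -- t • y tends to 0
  have hty : Tendsto (fun t : ℝ => t • y) (𝓝 0) (𝓝 0) := by
    have hcont : Continuous fun t : ℝ => t • y := continuous_id.smul continuous_const
    simpa using hcont.tendsto 0
  have hUev : ∀ᶠ t : ℝ in 𝓝 0, t • y ∈ U := hty (hU.mem_nhds h0U)
  -- limit of the rescaled derivative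
  have key : Tendsto (fun t : ℝ => (t ^ (ℓ - 1))⁻¹ • fderiv ℝ (fun z => F z - Qℓ z) (t • y))
      (𝓝[≠] (0 : ℝ)) (𝓝 0) := by
    apply squeeze_zero_norm' (a := fun t : ℝ => (C1 * ‖y‖ ^ ℓ) * |t|)
    · have hev := hty.eventually hC1
      filter_upwards [eventually_nhdsWithin_of_eventually_nhds hev, self_mem_nhdsWithin]
        with t ht ht0
      have ht0' : (t : ℝ) ≠ 0 := ht0
      rw [norm_smul]
      have hns : ‖t • y‖ ^ ℓ = |t| ^ ℓ * ‖y‖ ^ ℓ := by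
        rw [norm_smul, mul_pow, Real.norm_eq_abs]
      have h6 : ‖fderiv ℝ (fun z => F z - Qℓ z) (t • y)‖ ≤ C1 * (|t| ^ ℓ * ‖y‖ ^ ℓ) := by
        have := ht
        rw [norm_pow, norm_norm, hns] at this
        exact this
      have h7 : ‖(t ^ (ℓ - 1))⁻¹‖ = (|t| ^ (ℓ - 1))⁻¹ := by
        rw [norm_inv, norm_pow, Real.norm_eq_abs]
      rw [h7]
      have h8 : |t| ^ ℓ = |t| ^ (ℓ - 1) * |t| := by
        conv_lhs => rw [show ℓ = (ℓ - 1) + 1 by omega]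
        rw [pow_succ]
      have h9 : (0 : ℝ) < |t| ^ (ℓ - 1) := pow_pos (abs_pos.2 ht0') _
      calc (|t| ^ (ℓ - 1))⁻¹ * ‖fderiv ℝ (fun z => F z - Qℓ z) (t • y)‖
          ≤ (|t| ^ (ℓ - 1))⁻¹ * (C1 * (|t| ^ ℓ * ‖y‖ ^ ℓ)) := by
            apply mul_le_mul_of_nonneg_left h6 (by positivity)
        _ = (C1 * ‖y‖ ^ ℓ) * |t| := by
            rw [h8]; field_simp
    · have : Tendsto (fun t : ℝ => (C1 * ‖y‖ ^ ℓ) * |t|) (𝓝 0) (𝓝 ((C1 * ‖y‖ ^ ℓ) * |0|)) :=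
        (continuous_const.mul continuous_abs).tendsto 0
      simp only [abs_zero, mul_zero] at this
      exact this.mono_left nhdsWithin_le_nhds
  have T1 : Tendsto (fun t : ℝ => (t ^ (ℓ - 1))⁻¹ • fderiv ℝ F (t • y))
      (𝓝[≠] (0 : ℝ)) (𝓝 (fderiv ℝ Qℓ y)) := by
    have hlim : Tendsto (fun t : ℝ => fderiv ℝ Qℓ y
        + (t ^ (ℓ - 1))⁻¹ • fderiv ℝ (fun z => F z - Qℓ z) (t • y))
        (𝓝[≠] (0 : ℝ)) (𝓝 (fderiv ℝ Qℓ y)) := by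
      have := key.const_add (fderiv ℝ Qℓ y)
      simpa using this
    apply hlim.congr'
    filter_upwards [eventually_nhdsWithin_of_eventually_nhds hUev, self_mem_nhdsWithin]
      with t htU ht0
    have ht0' : (t : ℝ) ≠ 0 := ht0
    have hFd : DifferentiableAt ℝ F (t • y) := (hFa _ htU).differentiableAt
    have hsub : fderiv ℝ (fun z => F z - Qℓ z) (t • y)
        = fderiv ℝ F (t • y) - fderiv ℝ Qℓ (t • y) := fderiv_sub hFd (hQdiff _)
    have hhomder : fderiv ℝ Qℓ (t • y) = t ^ (ℓ - 1) • fderiv ℝ Qℓ y :=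
      aux_fderiv_homog Qℓ ℓ hl1 hQdiff hhom ht0' y
    rw [hsub, hhomder, smul_sub, smul_smul, inv_mul_cancel₀ (pow_ne_zero _ ht0'), one_smul]
    abel
  -- limit of the rescaled vector field
  have T2 : Tendsto (fun t : ℝ => (t ^ k)⁻¹ • f (t • y)) (𝓝[≠] (0 : ℝ)) (𝓝 w) := by
    have hPSk : ∀ t : ℝ, (p k fun _ => t • y) = t ^ k • w := by
      intro t
      have := (p k).map_smul_univ (fun _ => t) (fun _ => y)
      simpa [Finset.prod_const] using this
    have key2 : Tendsto (fun t : ℝ => (t ^ k)⁻¹ • (f (t • y) - (p k fun _ => t • y)))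
        (𝓝[≠] (0 : ℝ)) (𝓝 0) := by
      apply squeeze_zero_norm' (a := fun t : ℝ => (C2 * ‖y‖ ^ (k + 1)) * |t|)
      · have hev := hty.eventually hC2
        filter_upwards [eventually_nhdsWithin_of_eventually_nhds hev, self_mem_nhdsWithin]
          with t ht ht0
        have ht0' : (t : ℝ) ≠ 0 := ht0
        rw [norm_smul]
        have hns : ‖t • y‖ ^ (k + 1) = |t| ^ (k + 1) * ‖y‖ ^ (k + 1) := by
          rw [norm_smul, mul_pow, Real.norm_eq_abs]
        have h6 : ‖f (t • y) - (p k fun _ => t • y)‖ ≤ C2 * (|t| ^ (k + 1) * ‖y‖ ^ (k + 1)) := by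
          have := ht
          rw [norm_pow, norm_norm, hns] at this
          exact this
        have h7 : ‖(t ^ k)⁻¹‖ = (|t| ^ k)⁻¹ := by
          rw [norm_inv, norm_pow, Real.norm_eq_abs]
        rw [h7]
        have h9 : (0 : ℝ) < |t| ^ k := pow_pos (abs_pos.2 ht0') _
        calc (|t| ^ k)⁻¹ * ‖f (t • y) - (p k fun _ => t • y)‖
            ≤ (|t| ^ k)⁻¹ * (C2 * (|t| ^ (k + 1) * ‖y‖ ^ (k + 1))) := by
              apply mul_le_mul_of_nonneg_left h6 (by positivity)
          _ = (C2 * ‖y‖ ^ (k + 1)) * |t| := by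
              rw [pow_succ]; field_simp
      · have : Tendsto (fun t : ℝ => (C2 * ‖y‖ ^ (k + 1)) * |t|) (𝓝 0)
            (𝓝 ((C2 * ‖y‖ ^ (k + 1)) * |0|)) := (continuous_const.mul continuous_abs).tendsto 0
        simp only [abs_zero, mul_zero] at this
        exact this.mono_left nhdsWithin_le_nhds
    have hlim : Tendsto (fun t : ℝ => w + (t ^ k)⁻¹ • (f (t • y) - (p k fun _ => t • y)))
        (𝓝[≠] (0 : ℝ)) (𝓝 w) := by
      have := key2.const_add w
      simpa using this
    apply hlim.congr'
    filter_upwards [self_mem_nhdsWithin] with t ht0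
    have ht0' : (t : ℝ) ≠ 0 := ht0
    rw [hPSk t, smul_sub, smul_smul, inv_mul_cancel₀ (pow_ne_zero _ ht0'), one_smul]
    abel
  -- combine
  have hcont : Continuous fun z : ((Fin n → ℝ) →L[ℝ] ℝ) × (Fin n → ℝ) => z.1 z.2 :=
    isBoundedBilinearMap_apply.continuous
  have Tprod : Tendsto (fun t : ℝ =>
      ((t ^ (ℓ - 1))⁻¹ • fderiv ℝ F (t • y)) ((t ^ k)⁻¹ • f (t • y)))
      (𝓝[≠] (0 : ℝ)) (𝓝 (fderiv ℝ Qℓ y w)) := by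
    exact (hcont.tendsto (fderiv ℝ Qℓ y, w)).comp (T1.prodMk_nhds T2)
  have heq0 : ∀ᶠ t : ℝ in 𝓝[≠] (0 : ℝ),
      ((t ^ (ℓ - 1))⁻¹ • fderiv ℝ F (t • y)) ((t ^ k)⁻¹ • f (t • y)) = 0 := by
    filter_upwards [eventually_nhdsWithin_of_eventually_nhds hUev] with t htU
    simp only [ContinuousLinearMap.smul_apply, map_smul, hfirst _ htU, smul_zero]
  have hzero : Tendsto (fun t : ℝ =>
      ((t ^ (ℓ - 1))⁻¹ • fderiv ℝ F (t • y)) ((t ^ k)⁻¹ • f (t • y)))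
      (𝓝[≠] (0 : ℝ)) (𝓝 0) := by
    apply Tendsto.congr' (heq0.mono fun t ht => ht.symm)
    exact tendsto_const_nhds
  exact tendsto_nhds_unique Tprod hzero
end

section
/- Let n ≥ 1, k ≥ 1 be integers and let f be a real-analytic vector field on a neighborhood U of 0 in ℝⁿ with Taylor expansion f(x) = Σ_{j ≥ k} f_j(x) at 0, where each component of f_j is a homogeneous polynomial of degree j and f_k ≠ 0. Let v be a real-analytic vector field on U, not identically zero near 0, that commutes with f, i.e., [v, f](x) := Df(x)v(x) − Dv(x)f(x) = 0 on U. Let ℓ be the smallest integer such that the degree-ℓ homogeneous Taylor part v_ℓ of v at 0 is nonzero. Then v_ℓ commutes with the truncated vector field f_k, i.e., Df_k(y)v_ℓ(y) − Dv_ℓ(y)f_k(y) = 0 for all y ∈ ℝⁿ. -/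
open Filter Asymptotics Topology

section Aux

variable {E F : Type*} [NormedAddCommGroup E] [NormedSpace ℝ E]
  [NormedAddCommGroup F] [NormedSpace ℝ F]

/-- If the diagonal homogeneous parts of `q` below degree `ℓ` vanish, then
`t^{-ℓ} • v (t • y)` tends to the degree-`ℓ` part at `y`. -/
lemma diag_tendsto {v : E → F} {q : FormalMultilinearSeries ℝ E F}
    (hv : HasFPowerSeriesAt v q 0) (ℓ : ℕ)
    (hlow : ∀ j < ℓ, ∀ x, (q j fun _ => x) = 0) (y : E) :
    Tendsto (fun t : ℝ => (t ^ ℓ)⁻¹ • v (t • y)) (𝓝[≠] 0) (𝓝 (q ℓ fun _ => y)) := by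
  have hcont : Tendsto (fun t : ℝ => t • y) (𝓝 0) (𝓝 0) := by
    have h : Continuous fun t : ℝ => t • y := continuous_id.smul continuous_const
    simpa using h.tendsto 0
  have hO := (hv.isBigO_sub_partialSum_pow (ℓ + 1)).comp_tendsto hcont
  simp only [zero_add, Function.comp_def] at hO
  have hdiag : ∀ (j : ℕ) (t : ℝ), (q j fun _ => t • y) = t ^ j • (q j fun _ => y) := by
    intro j t
    calc (q j fun _ => t • y)
        = q j (fun i : Fin j => (fun _ : Fin j => t) i • (fun _ : Fin j => y) i) := rfl
      _ = (∏ _i : Fin j, t) • q j (fun _ => y) := (q j).map_smul_univ _ _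
      _ = t ^ j • (q j fun _ => y) := by simp
  have hps : ∀ t : ℝ, q.partialSum (ℓ + 1) (t • y) = t ^ ℓ • (q ℓ fun _ => y) := by
    intro t
    rw [FormalMultilinearSeries.partialSum,
      Finset.sum_eq_single ℓ (fun j hj hjℓ => ?_) (by simp)]
    · exact hdiag ℓ t
    · have : j < ℓ := by
        have := Finset.mem_range.1 hj; omega
      rw [hdiag j t, hlow j this, smul_zero]
  have key : (fun t : ℝ => (t ^ ℓ)⁻¹ • v (t • y) - (q ℓ fun _ => y))
      =O[𝓝[≠] 0] fun t : ℝ => t := by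
    rcases hO.bound with ⟨C, hC⟩
    rw [Asymptotics.isBigO_iff]
    refine ⟨C * ‖y‖ ^ (ℓ + 1), ?_⟩
    filter_upwards [nhdsWithin_le_nhds hC, self_mem_nhdsWithin] with t ht ht0
    have ht0' : (t : ℝ) ≠ 0 := ht0
    have htℓ : t ^ ℓ ≠ 0 := pow_ne_zero _ ht0'
    have heq : (t ^ ℓ)⁻¹ • v (t • y) - (q ℓ fun _ => y)
        = (t ^ ℓ)⁻¹ • (v (t • y) - q.partialSum (ℓ + 1) (t • y)) := by
      rw [hps, smul_sub, smul_smul, inv_mul_cancel₀ htℓ, one_smul]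
    rw [heq, norm_smul]
    have h1 : ‖v (t • y) - q.partialSum (ℓ + 1) (t • y)‖
        ≤ C * (‖t • y‖ ^ (ℓ + 1)) := by
      simpa [abs_of_nonneg (pow_nonneg (norm_nonneg _) _)] using ht
    have h2 : ‖t • y‖ ^ (ℓ + 1) = |t| ^ (ℓ + 1) * ‖y‖ ^ (ℓ + 1) := by
      rw [norm_smul, Real.norm_eq_abs, mul_pow]
    have h3 : ‖(t ^ ℓ)⁻¹‖ = (|t| ^ ℓ)⁻¹ := by
      rw [norm_inv, Real.norm_eq_abs, abs_pow]
    have habs : (0 : ℝ) < |t| := abs_pos.2 ht0'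
    calc ‖(t ^ ℓ)⁻¹‖ * ‖v (t • y) - q.partialSum (ℓ + 1) (t • y)‖
        ≤ (|t| ^ ℓ)⁻¹ * (C * (|t| ^ (ℓ + 1) * ‖y‖ ^ (ℓ + 1))) := by
          rw [h3]
          exact mul_le_mul_of_nonneg_left (by rw [← h2]; exact h1)
            (inv_nonneg.2 (pow_nonneg (abs_nonneg _) _))
      _ = C * ‖y‖ ^ (ℓ + 1) * |t| := by
          field_simp
          ring
      _ ≤ C * ‖y‖ ^ (ℓ + 1) * ‖t‖ := by rw [Real.norm_eq_abs]
  have h0 : Tendsto (fun t : ℝ => (t ^ ℓ)⁻¹ • v (t • y) - (q ℓ fun _ => y)) (𝓝[≠] 0) (𝓝 0) :=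
    key.trans_tendsto (tendsto_id.mono_left nhdsWithin_le_nhds)
  have := h0.add_const (q ℓ fun _ => y)
  simpa using this

/-- Derivative of the diagonal restriction of a continuous multilinear map. -/
lemma hasFDerivAt_diag (m : ℕ) (M : ContinuousMultilinearMap ℝ (fun _ : Fin m => E) F) (x : E) :
    HasFDerivAt (fun z => M fun _ => z)
      (∑ i : Fin m, M.toContinuousLinearMap (fun _ => x) i) x := by
  have h := HasFDerivAt.multilinear_comp (f := M) (g := fun _ (z : E) => z)
    (g' := fun _ => ContinuousLinearMap.id ℝ E) (x := x) (fun _ => hasFDerivAt_id x)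
  simpa using h

open Finset in
/-- General-direction version of `derivSeries_apply_diag`. -/
lemma derivSeries_apply_diag' (p : FormalMultilinearSeries ℝ E F) (n : ℕ) (x w : E) :
    p.derivSeries n (fun _ ↦ x) w
      = ∑ i : Fin (1 + n), p (1 + n) (Function.update (fun _ ↦ x) i w) := by
  simp only [FormalMultilinearSeries.derivSeries,
    ContinuousLinearMap.compFormalMultilinearSeries_apply,
    FormalMultilinearSeries.changeOriginSeries,
    ContinuousLinearMap.compContinuousMultilinearMap_coe, ContinuousLinearEquiv.coe_coe,
    LinearIsometryEquiv.coe_coe, Function.comp_apply, ContinuousMultilinearMap.sum_apply, map_sum,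
    ContinuousLinearMap.coe_sum', Finset.sum_apply, continuousMultilinearCurryFin1_apply,
    Matrix.zero_empty]
  refine (Fintype.sum_bijective
    (fun i : Fin (1 + n) => (⟨{i}ᶜ, by
      rw [card_compl, Fintype.card_fin, Finset.card_singleton]; omega⟩ :
        {s : Finset (Fin (1 + n)) // #s = n})) ?_ _ _ fun i ↦ ?_).symm
  · constructor
    · intro a b hab
      exact singleton_injective <| compl_injective <| Subtype.ext_iff.mp hab
    · rintro ⟨s, hs⟩
      have h : #sᶜ = 1 := by rw [card_compl, hs, Fintype.card_fin]; omega
      obtain ⟨a, ha⟩ := card_eq_one.mp h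
      exact ⟨a, Subtype.ext (compl_eq_comm.mp ha)⟩
  · rw [Fin.snoc_zero, FormalMultilinearSeries.changeOriginSeriesTerm_apply]
    congr 1
    ext j
    rcases eq_or_ne j i with rfl | hj
    · simp [Finset.piecewise]
    · simp [Finset.piecewise, Function.update_apply, hj]

/-- The leading derivative series term is the derivative of the diagonal part. -/
lemma fderiv_diag_eq_derivSeries (p : FormalMultilinearSeries ℝ E F) (n : ℕ) (x : E) :
    fderiv ℝ (fun z => p (1 + n) fun _ => z) x = p.derivSeries n (fun _ => x) := by
  refine ContinuousLinearMap.ext fun w => ?_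
  rw [(hasFDerivAt_diag (1 + n) (p (1 + n)) x).fderiv, derivSeries_apply_diag',
    ContinuousLinearMap.sum_apply]
  simp

lemma smul_apply_smul {G H : Type*} [NormedAddCommGroup G] [NormedSpace ℝ G]
    [NormedAddCommGroup H] [NormedSpace ℝ H] (a b t : ℝ) (A : G →L[ℝ] H) (u : G) :
    (a • t • A) (b • u) = (a * t * b) • A u := by
  simp only [ContinuousLinearMap.smul_apply, map_smul, smul_smul]
  ring_nf

end Aux

/-- If `v` is an analytic vector field (not identically zero near `0`) commuting with the
real-analytic vector field `f`, where the Taylor expansion of `f` at `0` starts with the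
nonzero homogeneous part `f_k` of degree `k`, then the leading homogeneous Taylor part
`v_ℓ` of `v` at `0` commutes with the truncated vector field `f_k`.
The degree-`j` homogeneous Taylor parts are `y ↦ p j (y, …, y)` and `y ↦ q j (y, …, y)`,
where `p, q` are the power series of `f, v` at `0`. -/
theorem leading_part_commutes (n k ℓ : ℕ) (hn : 1 ≤ n) (hk : 1 ≤ k)
    (U : Set (Fin n → ℝ)) (hU : IsOpen U) (h0U : (0 : Fin n → ℝ) ∈ U)
    (f : (Fin n → ℝ) → (Fin n → ℝ)) (hfa : AnalyticOnNhd ℝ f U)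
    (p : FormalMultilinearSeries ℝ (Fin n → ℝ) (Fin n → ℝ))
    (hf : HasFPowerSeriesAt f p 0)
    (hplow : ∀ j < k, ∀ x, (p j fun _ => x) = 0)
    (hfk : ∃ x, (p k fun _ => x) ≠ 0)
    (v : (Fin n → ℝ) → (Fin n → ℝ)) (hva : AnalyticOnNhd ℝ v U)
    (q : FormalMultilinearSeries ℝ (Fin n → ℝ) (Fin n → ℝ))
    (hv : HasFPowerSeriesAt v q 0)
    (hcomm : ∀ x ∈ U, fderiv ℝ f x (v x) - fderiv ℝ v x (f x) = 0)
    -- `ℓ` is the smallest degree with nonvanishing homogeneous Taylor part of `v`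
    (hqlow : ∀ j < ℓ, ∀ x, (q j fun _ => x) = 0)
    (hqℓ : ∃ x, (q ℓ fun _ => x) ≠ 0) :
    ∀ y, fderiv ℝ (fun z => p k fun _ => z) y (q ℓ fun _ => y)
        - fderiv ℝ (fun z => q ℓ fun _ => z) y (p k fun _ => y) = 0 := by
  intro y
  obtain ⟨k', rfl⟩ := Nat.exists_eq_add_of_le hk
  have hcont : Tendsto (fun t : ℝ => t • y) (𝓝 0) (𝓝 0) := by
    have h : Continuous fun t : ℝ => t • y := continuous_id.smul continuous_const
    simpa using h.tendsto 0
  have hdf : HasFPowerSeriesAt (fderiv ℝ f) p.derivSeries 0 := by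
    obtain ⟨r, hr⟩ := id hf; exact ⟨r, hr.fderiv⟩
  have hdv : HasFPowerSeriesAt (fderiv ℝ v) q.derivSeries 0 := by
    obtain ⟨r, hr⟩ := id hv; exact ⟨r, hr.fderiv⟩
  have hdplow : ∀ j < k', ∀ x, (p.derivSeries j fun _ => x) = 0 := by
    intro j hj x
    rw [← fderiv_diag_eq_derivSeries]
    have hz : (fun z : Fin n → ℝ => p (1 + j) fun _ => z) = fun _ => (0 : Fin n → ℝ) := by
      funext z; exact hplow (1 + j) (by omega) z
    rw [hz]
    exact fderiv_const_apply 0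
  -- limits of the scaled fields and derivatives
  have h1 : Tendsto (fun t : ℝ => (t ^ (1 + k'))⁻¹ • f (t • y)) (𝓝[≠] 0)
      (𝓝 (p (1 + k') fun _ => y)) := diag_tendsto hf (1 + k') hplow y
  have h2 : Tendsto (fun t : ℝ => (t ^ ℓ)⁻¹ • v (t • y)) (𝓝[≠] 0)
      (𝓝 (q ℓ fun _ => y)) := diag_tendsto hv ℓ hqlow y
  have h3 : Tendsto (fun t : ℝ => (t ^ k')⁻¹ • fderiv ℝ f (t • y)) (𝓝[≠] 0)
      (𝓝 (p.derivSeries k' fun _ => y)) := diag_tendsto hdf k' hdplow y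
  rw [← fderiv_diag_eq_derivSeries p k' y] at h3
  have h3' : Tendsto (fun t : ℝ => (t ^ (1 + k'))⁻¹ • (t • fderiv ℝ f (t • y))) (𝓝[≠] 0)
      (𝓝 (fderiv ℝ (fun z => p (1 + k') fun _ => z) y)) := by
    apply h3.congr'
    filter_upwards [self_mem_nhdsWithin] with t ht0
    have ht : (t : ℝ) ≠ 0 := ht0
    rw [smul_smul]
    congr 1
    rw [pow_add, pow_one]
    field_simp
  have h4 : Tendsto (fun t : ℝ => (t ^ ℓ)⁻¹ • (t • fderiv ℝ v (t • y))) (𝓝[≠] 0)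
      (𝓝 (fderiv ℝ (fun z => q ℓ fun _ => z) y)) := by
    rcases Nat.eq_zero_or_pos ℓ with rfl | hℓ
    · have hconst : (fun z : Fin n → ℝ => q 0 fun _ => z)
          = fun _ => q 0 fun _ => (0 : Fin n → ℝ) := by
        funext z; congr 1; funext i; exact i.elim0
      rw [hconst, fderiv_const_apply]
      have hDvcont : Tendsto (fderiv ℝ v) (𝓝 0) (𝓝 (fderiv ℝ v 0)) :=
        hdv.analyticAt.continuousAt.tendsto
      have h5 : Tendsto (fun t : ℝ => t • fderiv ℝ v (t • y)) (𝓝 0)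
          (𝓝 ((0 : ℝ) • fderiv ℝ v 0)) := tendsto_id.smul (hDvcont.comp hcont)
      rw [zero_smul] at h5
      have h6 : Tendsto (fun t : ℝ => t • fderiv ℝ v (t • y)) (𝓝[≠] 0) (𝓝 0) :=
        h5.mono_left nhdsWithin_le_nhds
      simpa using h6
    · obtain ⟨ℓ', rfl⟩ := Nat.exists_eq_add_of_le hℓ
      have hdqlow : ∀ j < ℓ', ∀ x, (q.derivSeries j fun _ => x) = 0 := by
        intro j hj x
        rw [← fderiv_diag_eq_derivSeries]
        have hz : (fun z : Fin n → ℝ => q (1 + j) fun _ => z) = fun _ => (0 : Fin n → ℝ) := by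
          funext z; exact hqlow (1 + j) (by omega) z
        rw [hz]
        exact fderiv_const_apply 0
      have h4' : Tendsto (fun t : ℝ => (t ^ ℓ')⁻¹ • fderiv ℝ v (t • y)) (𝓝[≠] 0)
          (𝓝 (q.derivSeries ℓ' fun _ => y)) := diag_tendsto hdv ℓ' hdqlow y
      rw [← fderiv_diag_eq_derivSeries q ℓ' y] at h4'
      apply h4'.congr'
      filter_upwards [self_mem_nhdsWithin] with t ht0
      have ht : (t : ℝ) ≠ 0 := ht0
      rw [smul_smul]
      congr 1
      rw [pow_add, pow_one]
      field_simp
  -- combine the limits through the continuous bilinear application map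
  have happly : Continuous fun z : ((Fin n → ℝ) →L[ℝ] (Fin n → ℝ)) × (Fin n → ℝ) => z.1 z.2 :=
    isBoundedBilinearMap_apply.continuous
  have hleft : Tendsto
      (fun t : ℝ => ((t ^ (1 + k'))⁻¹ • (t • fderiv ℝ f (t • y))) ((t ^ ℓ)⁻¹ • v (t • y)))
      (𝓝[≠] 0) (𝓝 (fderiv ℝ (fun z => p (1 + k') fun _ => z) y (q ℓ fun _ => y))) :=
    (happly.tendsto _).comp (h3'.prodMk_nhds h2)
  have hright : Tendsto
      (fun t : ℝ => ((t ^ ℓ)⁻¹ • (t • fderiv ℝ v (t • y))) ((t ^ (1 + k'))⁻¹ • f (t • y)))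
      (𝓝[≠] 0) (𝓝 (fderiv ℝ (fun z => q ℓ fun _ => z) y (p (1 + k') fun _ => y))) :=
    (happly.tendsto _).comp (h4.prodMk_nhds h1)
  have heq : (fun t : ℝ => ((t ^ (1 + k'))⁻¹ • (t • fderiv ℝ f (t • y))) ((t ^ ℓ)⁻¹ • v (t • y)))
      =ᶠ[𝓝[≠] 0]
      (fun t : ℝ => ((t ^ ℓ)⁻¹ • (t • fderiv ℝ v (t • y))) ((t ^ (1 + k'))⁻¹ • f (t • y))) := by
    have hUy : ∀ᶠ t : ℝ in 𝓝 0, t • y ∈ U := hcont.eventually (hU.eventually_mem h0U)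
    filter_upwards [nhdsWithin_le_nhds hUy] with t htU
    have hb : fderiv ℝ f (t • y) (v (t • y)) = fderiv ℝ v (t • y) (f (t • y)) :=
      sub_eq_zero.1 (hcomm _ htU)
    rw [smul_apply_smul, smul_apply_smul, hb,
      show (t ^ (1 + k'))⁻¹ * t * (t ^ ℓ)⁻¹ = (t ^ ℓ)⁻¹ * t * (t ^ (1 + k'))⁻¹ by ring]
  have hfinal := tendsto_nhds_unique (hleft.congr' heq) hright
  rw [sub_eq_zero]
  exact hfinal
end

section
/- Let α₁, α₃, α₄ ∈ ℝ with α₁ ≠ 0. On the open half-plane D = {(r, x₃) ∈ ℝ² : r > 0}, the function Q(r, x₃) = r^{−2α₄/α₁} (α₃ r² + (α₄ − α₁) x₃²) is a first integral of the planar system ṙ = α₁ r x₃, ẋ₃ = α₃ r² + α₄ x₃²; that is, for all (r, x₃) ∈ D, ∂Q/∂r(r, x₃) · α₁ r x₃ + ∂Q/∂x₃(r, x₃) · (α₃ r² + α₄ x₃²) = 0. -/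
/-- On the half-plane `r > 0`, the function
`Q(r, x₃) = r^(−2α₄/α₁) (α₃ r² + (α₄ − α₁) x₃²)` is a first integral of the planar
system `ṙ = α₁ r x₃`, `ẋ₃ = α₃ r² + α₄ x₃²` (partial derivatives taken as derivatives
of the one-variable slices). -/
theorem first_integral_foldHopf_planar (α₁ α₃ α₄ : ℝ) (hα₁ : α₁ ≠ 0) :
    ∀ r x₃ : ℝ, 0 < r →
      deriv (fun s : ℝ => s ^ (-2 * α₄ / α₁) * (α₃ * s ^ 2 + (α₄ - α₁) * x₃ ^ 2)) r
          * (α₁ * r * x₃)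
        + deriv (fun s : ℝ => r ^ (-2 * α₄ / α₁) * (α₃ * r ^ 2 + (α₄ - α₁) * s ^ 2)) x₃
          * (α₃ * r ^ 2 + α₄ * x₃ ^ 2) = 0 := by
  intro r x₃ hr
  set c : ℝ := -2 * α₄ / α₁ with hc
  have h1 : HasDerivAt (fun s : ℝ => s ^ c * (α₃ * s ^ 2 + (α₄ - α₁) * x₃ ^ 2))
      (c * r ^ (c - 1) * (α₃ * r ^ 2 + (α₄ - α₁) * x₃ ^ 2)
        + r ^ c * (α₃ * (2 * r ^ 1))) r := by
    exact (Real.hasDerivAt_rpow_const (Or.inl hr.ne')).mul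
      (((hasDerivAt_pow 2 r).const_mul α₃).add_const _)
  have h2 : HasDerivAt (fun s : ℝ => r ^ c * (α₃ * r ^ 2 + (α₄ - α₁) * s ^ 2))
      (r ^ c * ((α₄ - α₁) * (2 * x₃ ^ 1))) x₃ := by
    exact (((hasDerivAt_pow 2 x₃).const_mul (α₄ - α₁)).const_add _).const_mul _
  rw [h1.deriv, h2.deriv]
  have hsub : r ^ (c - 1) = r ^ c / r := Real.rpow_sub_one hr.ne' c
  rw [hsub, hc]
  field_simp
  ring
end

section
/- Let α₁, α₂, α₃, α₄ ∈ ℝ with α₁ ≠ α₃. On the open set D = {(r₁, r₂) ∈ ℝ² : r₁ > 0, r₂ > 0, (α₁ − α₃) r₁² + (α₂ − α₄) r₂² > 0}, the function Q(r₁, r₂) = (r₁^{α₄} / r₂^{α₂})^{2(α₁ − α₃)} · ((α₁ − α₃) r₁²/r₂² + α₂ − α₄)^{α₂α₃ − α₁α₄} is a first integral of the planar system ṙ₁ = (α₁ r₁² + α₂ r₂²) r₁, ṙ₂ = (α₃ r₁² + α₄ r₂²) r₂; that is, for all (r₁, r₂) ∈ D, ∂Q/∂r₁(r₁, r₂) ·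 (α₁r₁² + α₂r₂²)r₁ + ∂Q/∂r₂(r₁, r₂) · (α₃r₁² + α₄r₂²)r₂ = 0. -/
/-- On the set `r₁, r₂ > 0`, `(α₁ − α₃)r₁² + (α₂ − α₄)r₂² > 0`, the function
`Q(r₁, r₂) = (r₁^α₄ / r₂^α₂)^(2(α₁ − α₃)) ((α₁ − α₃)r₁²/r₂² + α₂ − α₄)^(α₂α₃ − α₁α₄)`
is a first integral of the planar system `ṙ₁ = (α₁r₁² + α₂r₂²)r₁`,
`ṙ₂ = (α₃r₁² + α₄r₂²)r₂` (partial derivatives taken as derivatives of the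
one-variable slices). -/
theorem first_integral_doubleHopf_planar (α₁ α₂ α₃ α₄ : ℝ) (hα : α₁ ≠ α₃) :
    ∀ r₁ r₂ : ℝ, 0 < r₁ → 0 < r₂ →
      0 < (α₁ - α₃) * r₁ ^ 2 + (α₂ - α₄) * r₂ ^ 2 →
      deriv (fun s : ℝ => (s ^ α₄ / r₂ ^ α₂) ^ (2 * (α₁ - α₃))
            * ((α₁ - α₃) * s ^ 2 / r₂ ^ 2 + α₂ - α₄) ^ (α₂ * α₃ - α₁ * α₄)) r₁
          * ((α₁ * r₁ ^ 2 + α₂ * r₂ ^ 2) * r₁)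
        + deriv (fun s : ℝ => (r₁ ^ α₄ / s ^ α₂) ^ (2 * (α₁ - α₃))
            * ((α₁ - α₃) * r₁ ^ 2 / s ^ 2 + α₂ - α₄) ^ (α₂ * α₃ - α₁ * α₄)) r₂
          * ((α₃ * r₁ ^ 2 + α₄ * r₂ ^ 2) * r₂) = 0 := by
  intro r₁ r₂ hr₁ hr₂ hD
  set A := α₁ - α₃ with hAdef
  set β := α₂ * α₃ - α₁ * α₄ with hβdef
  have hr₁0 : r₁ ≠ 0 := hr₁.ne'
  have hr₂0 : r₂ ≠ 0 := hr₂.ne'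
  have ha : (0:ℝ) < r₁ ^ α₄ := Real.rpow_pos_of_pos hr₁ _
  have hb : (0:ℝ) < r₂ ^ α₂ := Real.rpow_pos_of_pos hr₂ _
  have hab : (0:ℝ) < r₁ ^ α₄ / r₂ ^ α₂ := div_pos ha hb
  have hw : (0:ℝ) < A * r₁ ^ 2 / r₂ ^ 2 + α₂ - α₄ := by
    have h2 : (0:ℝ) < r₂ ^ 2 := by positivity
    have heq : A * r₁ ^ 2 / r₂ ^ 2 + α₂ - α₄
        = (A * r₁ ^ 2 + (α₂ - α₄) * r₂ ^ 2) / r₂ ^ 2 := by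
      field_simp; ring
    rw [heq]; exact div_pos hD h2
  -- slice 1
  have hu1 : HasDerivAt (fun s : ℝ => (s ^ α₄ / r₂ ^ α₂) ^ (2 * A))
      ((α₄ * r₁ ^ (α₄ - 1) / r₂ ^ α₂) * (2 * A) * (r₁ ^ α₄ / r₂ ^ α₂) ^ (2 * A - 1)) r₁ :=
    ((Real.hasDerivAt_rpow_const (Or.inl hr₁0)).div_const _).rpow_const (Or.inl hab.ne')
  have hg1 : HasDerivAt (fun s : ℝ => A * s ^ 2 / r₂ ^ 2 + α₂ - α₄)
      (A * (↑2 * r₁ ^ 1) / r₂ ^ 2) r₁ :=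
    ((((hasDerivAt_pow 2 r₁).const_mul A).div_const _).add_const α₂).sub_const α₄
  have hv1 : HasDerivAt (fun s : ℝ => (A * s ^ 2 / r₂ ^ 2 + α₂ - α₄) ^ β)
      ((A * (↑2 * r₁ ^ 1) / r₂ ^ 2) * β * (A * r₁ ^ 2 / r₂ ^ 2 + α₂ - α₄) ^ (β - 1)) r₁ :=
    hg1.rpow_const (Or.inl hw.ne')
  have hQ1 : deriv (fun s : ℝ => (s ^ α₄ / r₂ ^ α₂) ^ (2 * A) * (A * s ^ 2 / r₂ ^ 2 + α₂ - α₄) ^ β) r₁ = _ :=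
    (hu1.mul hv1).deriv
  -- slice 2
  have hu2 : HasDerivAt (fun s : ℝ => (r₁ ^ α₄ / s ^ α₂) ^ (2 * A))
      (((0 * r₂ ^ α₂ - r₁ ^ α₄ * (α₂ * r₂ ^ (α₂ - 1))) / (r₂ ^ α₂) ^ 2) * (2 * A)
        * (r₁ ^ α₄ / r₂ ^ α₂) ^ (2 * A - 1)) r₂ :=
    ((hasDerivAt_const r₂ (r₁ ^ α₄)).div (Real.hasDerivAt_rpow_const (Or.inl hr₂0))
      hb.ne').rpow_const (Or.inl hab.ne')
  have hg2 : HasDerivAt (fun s : ℝ => A * r₁ ^ 2 / s ^ 2 + α₂ - α₄)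
      ((0 * r₂ ^ 2 - A * r₁ ^ 2 * (↑2 * r₂ ^ 1)) / (r₂ ^ 2) ^ 2) r₂ :=
    (((hasDerivAt_const r₂ (A * r₁ ^ 2)).div (hasDerivAt_pow 2 r₂)
      (by positivity)).add_const α₂).sub_const α₄
  have hv2 : HasDerivAt (fun s : ℝ => (A * r₁ ^ 2 / s ^ 2 + α₂ - α₄) ^ β)
      (((0 * r₂ ^ 2 - A * r₁ ^ 2 * (↑2 * r₂ ^ 1)) / (r₂ ^ 2) ^ 2) * β
        * (A * r₁ ^ 2 / r₂ ^ 2 + α₂ - α₄) ^ (β - 1)) r₂ :=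
    hg2.rpow_const (Or.inl hw.ne')
  have hQ2 : deriv (fun s : ℝ => (r₁ ^ α₄ / s ^ α₂) ^ (2 * A) * (A * r₁ ^ 2 / s ^ 2 + α₂ - α₄) ^ β) r₂ = _ :=
    (hu2.mul hv2).deriv
  rw [hQ1, hQ2, Real.rpow_sub hr₁ α₄ 1, Real.rpow_sub hr₂ α₂ 1,
    Real.rpow_sub hab (2 * A) 1, Real.rpow_sub hw β 1, Real.rpow_one, Real.rpow_one,
    Real.rpow_one, Real.rpow_one]
  have h2 : (0:ℝ) < r₂ ^ 2 := by positivity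
  have heq : A * r₁ ^ 2 / r₂ ^ 2 + α₂ - α₄
      = (A * r₁ ^ 2 + (α₂ - α₄) * r₂ ^ 2) / r₂ ^ 2 := by
    field_simp; ring
  rw [heq, Real.div_rpow hD.le h2.le]
  have hT : (0:ℝ) < (A * r₁ ^ 2 + (α₂ - α₄) * r₂ ^ 2) ^ β := Real.rpow_pos_of_pos hD β
  have hS : (0:ℝ) < (r₂ ^ 2 : ℝ) ^ β := Real.rpow_pos_of_pos h2 β
  field_simp [ha.ne', hb.ne', hD.ne', hT.ne', hS.ne']
  have hD' : A * r₁ ^ 2 + α₂ * r₂ ^ 2 - α₄ * r₂ ^ 2 ≠ 0 := (by linarith : (0:ℝ) < A * r₁ ^ 2 + α₂ * r₂ ^ 2 - α₄ * r₂ ^ 2).ne'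
  field_simp
  rw [hβdef, hAdef]
  ring
end
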